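/- Let k ≥ 1 and l be integers with k+2 ≤ l ≤ k+4. Then R^l_k = {e_i − e_j : 1 ≤ i, j ≤ l, i ≠ j} ∪ {ε·(e₀ − Σ_{i∈S} e_i) : ε ∈ {1, −1}, S ⊆ {1, …, l}, |S| = k+2}; that is, the roots are exactly the differences of two distinct exceptional basis vectors together with the vectors ±(e₀ − e_{i₁} − ⋯ − e_{i_{k+2}}) for all choices of k+2 distinct indices in {1, …, l}. -/

import Mathlib

/-- The standard basis vector `e_n` of `ℤ^{l+1}` (for `n ≤ l`). -/
def unitVec (l n : ℕ) : Fin (l + 1) → ℤ :=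
  fun i => if (i : ℕ) = n then 1 else 0

/-- The symmetric bilinear form on `ℤ^{l+1}` with `B(e₀,e₀) = k`, `B(eᵢ,eᵢ) = -1` for
`1 ≤ i ≤ l`, and `B(eᵢ,eⱼ) = 0` for `i ≠ j`. -/
def bformZ (k l : ℕ) (v w : Fin (l + 1) → ℤ) : ℤ :=
  ((k : ℤ) + 1) * (v 0 * w 0) - ∑ i, v i * w i

/-- The vector `ω' = -(k+2)·e₀ + k·(e₁ + ⋯ + e_l)`. -/
def omegaZ (k l : ℕ) : Fin (l + 1) → ℤ :=
  fun i => if i = 0 then -((k : ℤ) + 2) else (k : ℤ)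

/-- The root system `R^l_k = {v ∈ ℤ^{l+1} : B(v,v) = -2, B(v,ω') = 0}`. -/
def rootSet (k l : ℕ) : Set (Fin (l + 1) → ℤ) :=
  {v | bformZ k l v v = -2 ∧ bformZ k l v (omegaZ k l) = 0}

lemma int_consec_nonneg (n : ℤ) : 0 ≤ n * (n + 1) := by
  rcases le_or_gt 0 n with h | h
  · exact mul_nonneg h (by linarith)
  · have h1 : n ≤ -1 := by omega
    nlinarith

lemma key_ineq (x t : ℤ) : (2 * t - 1) * |x| ≤ x * x + t * (t - 1) := by
  have h := int_consec_nonneg (|x| - t)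
  nlinarith [abs_nonneg x, abs_mul_abs_self x]

lemma bound_a (k l : ℕ) (hk : 1 ≤ k) (hhi : l ≤ k + 4) (a : ℤ) (w : Fin l → ℤ)
    (h1 : ∑ i, w i * w i = k * (a * a) + 2)
    (h2 : ∑ i, w i = -((k : ℤ) + 2) * a) :
    a * a ≤ 1 := by
  by_contra hcon
  push_neg at hcon
  set t : ℤ := |a| with ht
  have hta : t * t = a * a := abs_mul_abs_self a
  have ht0 : 0 ≤ t := abs_nonneg a
  have ht2 : 2 ≤ t := by nlinarith
  have hsum : ∑ i, (2 * t - 1) * |w i| ≤ ∑ i, (w i * w i + t * (t - 1)) :=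
    Finset.sum_le_sum (fun i _ => key_ineq (w i) t)
  have hrhs : ∑ i, (w i * w i + t * (t - 1)) = (k * (a * a) + 2) + l * (t * (t - 1)) := by
    rw [Finset.sum_add_distrib, h1, Finset.sum_const, Finset.card_univ, Fintype.card_fin]
    ring
  have hlhs : (2 * t - 1) * ((k : ℤ) + 2) * t ≤ ∑ i, (2 * t - 1) * |w i| := by
    rw [← Finset.mul_sum]
    have habs : ((k : ℤ) + 2) * t ≤ ∑ i, |w i| := by
      have h := Finset.abs_sum_le_sum_abs w Finset.univ
      rw [h2, abs_mul, abs_neg] at h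
      have hk2 : |(k : ℤ) + 2| = (k : ℤ) + 2 := abs_of_nonneg (by positivity)
      rw [hk2] at h
      exact h
    have h2t : (0 : ℤ) ≤ 2 * t - 1 := by linarith
    calc (2 * t - 1) * ((k : ℤ) + 2) * t = (2 * t - 1) * (((k : ℤ) + 2) * t) := by ring
      _ ≤ (2 * t - 1) * ∑ i, |w i| := mul_le_mul_of_nonneg_left habs h2t
  have hl : (l : ℤ) ≤ (k : ℤ) + 4 := by exact_mod_cast hhi
  have hk' : (1 : ℤ) ≤ (k : ℤ) := by exact_mod_cast hk
  nlinarith [hsum, hrhs, hlhs,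
    mul_nonneg (mul_nonneg ht0 (by linarith : (0:ℤ) ≤ t - 1)) (by linarith : (0:ℤ) ≤ (k:ℤ) + 4 - l)]

lemma case_zero (l : ℕ) (w : Fin l → ℤ)
    (h1 : ∑ i, w i * w i = 2) (h2 : ∑ i, w i = 0) :
    ∃ i j : Fin l, i ≠ j ∧ w i = 1 ∧ w j = -1 ∧ ∀ m, m ≠ i → m ≠ j → w m = 0 := by
  have hb : ∀ i, w i = -1 ∨ w i = 0 ∨ w i = 1 := by
    intro i
    have hle : w i * w i ≤ 2 := by
      rw [← h1]
      exact Finset.single_le_sum (f := fun i => w i * w i)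
        (fun i _ => mul_self_nonneg (w i)) (Finset.mem_univ i)
    rcases le_or_gt (w i) (-2) with h | h
    · nlinarith
    · rcases le_or_gt 2 (w i) with h' | h'
      · nlinarith
      · omega
  have hsq : ∀ i, w i * w i =
      (if w i = 1 then (1:ℤ) else 0) + (if w i = -1 then (1:ℤ) else 0) := by
    intro i
    rcases hb i with h | h | h <;> rw [h] <;> norm_num
  have hw : ∀ i, w i =
      (if w i = 1 then (1:ℤ) else 0) - (if w i = -1 then (1:ℤ) else 0) := by
    intro i
    rcases hb i with h | h | h <;> rw [h] <;> norm_num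
  set P := Finset.univ.filter (fun i => w i = 1) with hP
  set N := Finset.univ.filter (fun i => w i = -1) with hN
  have hsP : ∑ i, (if w i = 1 then (1:ℤ) else 0) = (P.card : ℤ) := by
    rw [hP, Finset.sum_boole]
  have hsN : ∑ i, (if w i = -1 then (1:ℤ) else 0) = (N.card : ℤ) := by
    rw [hN, Finset.sum_boole]
  have e1 : (P.card : ℤ) + (N.card : ℤ) = 2 := by
    have h := Finset.sum_congr rfl (fun i (_ : i ∈ Finset.univ) => hsq i)
    rw [h1, Finset.sum_add_distrib, hsP, hsN] at h
    linarith
  have e2 : (P.card : ℤ) - (N.card : ℤ) = 0 := by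
    have h := Finset.sum_congr rfl (fun i (_ : i ∈ Finset.univ) => hw i)
    rw [h2, Finset.sum_sub_distrib, hsP, hsN] at h
    linarith
  have hPc : P.card = 1 := by omega
  have hNc : N.card = 1 := by omega
  obtain ⟨i, hi⟩ := Finset.card_eq_one.mp hPc
  obtain ⟨j, hj⟩ := Finset.card_eq_one.mp hNc
  have hwi : w i = 1 := by
    have : i ∈ P := hi ▸ Finset.mem_singleton_self i
    exact (Finset.mem_filter.mp this).2
  have hwj : w j = -1 := by
    have : j ∈ N := hj ▸ Finset.mem_singleton_self j
    exact (Finset.mem_filter.mp this).2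
  refine ⟨i, j, ?_, hwi, hwj, ?_⟩
  · intro h; rw [h, hwj] at hwi; norm_num at hwi
  · intro m hmi hmj
    have h1' : w m ≠ 1 := by
      intro h
      have : m ∈ P := Finset.mem_filter.mpr ⟨Finset.mem_univ m, h⟩
      rw [hi] at this
      exact hmi (Finset.mem_singleton.mp this)
    have h2' : w m ≠ -1 := by
      intro h
      have : m ∈ N := Finset.mem_filter.mpr ⟨Finset.mem_univ m, h⟩
      rw [hj] at this
      exact hmj (Finset.mem_singleton.mp this)
    rcases hb m with h | h | h
    · exact absurd h h2'
    · exact h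
    · exact absurd h h1'

lemma case_one (k l : ℕ) (a : ℤ) (ha : a = 1 ∨ a = -1) (w : Fin l → ℤ)
    (h1 : ∑ i, w i * w i = k * (a * a) + 2)
    (h2 : ∑ i, w i = -((k : ℤ) + 2) * a) :
    ∃ T : Finset (Fin l), (T.card : ℤ) = (k : ℤ) + 2 ∧
      ∀ i, w i = if i ∈ T then -a else 0 := by
  have ha2 : a * a = 1 := by rcases ha with h | h <;> rw [h] <;> norm_num
  have hz : ∑ i, w i * (w i + a) = 0 := by
    have heq : ∑ i, w i * (w i + a) = (∑ i, w i * w i) + (∑ i, w i) * a := by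
      rw [Finset.sum_mul, ← Finset.sum_add_distrib]
      exact Finset.sum_congr rfl (fun i _ => by ring)
    rw [heq, h1, h2]
    linear_combination (-2 : ℤ) * ha2
  have hnn : ∀ i ∈ Finset.univ, (0:ℤ) ≤ w i * (w i + a) := by
    intro i _
    rcases ha with h | h
    · rw [h]; exact int_consec_nonneg (w i)
    · rw [h]
      have := int_consec_nonneg (w i - 1)
      nlinarith
  have hterm : ∀ i, w i * (w i + a) = 0 := fun i =>
    (Finset.sum_eq_zero_iff_of_nonneg hnn).mp hz i (Finset.mem_univ i)
  have hdich : ∀ i, w i = 0 ∨ w i = -a := by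
    intro i
    rcases mul_eq_zero.mp (hterm i) with h | h
    · exact Or.inl h
    · exact Or.inr (by linarith)
  set T := Finset.univ.filter (fun i => w i = -a) with hT
  have hwT : ∀ i, w i = if i ∈ T then -a else 0 := by
    intro i
    by_cases h : i ∈ T
    · rw [if_pos h]; exact (Finset.mem_filter.mp h).2
    · rw [if_neg h]
      rcases hdich i with h' | h'
      · exact h'
      · exact absurd (Finset.mem_filter.mpr ⟨Finset.mem_univ i, h'⟩) h
  refine ⟨T, ?_, hwT⟩
  have heq : ∑ i, w i * w i = ∑ i, (if i ∈ T then (1:ℤ) else 0) := by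
    refine Finset.sum_congr rfl (fun i _ => ?_)
    rw [hwT i]
    by_cases h : i ∈ T
    · simp only [if_pos h]; rw [neg_mul_neg]; exact ha2
    · simp only [if_neg h]; ring
  rw [heq, Finset.sum_ite_mem, Finset.univ_inter, Finset.sum_const, nsmul_eq_mul, mul_one, ha2] at h1
  linarith

lemma omegaZ_zero (k l : ℕ) : omegaZ k l 0 = -((k:ℤ)+2) := by simp [omegaZ]

lemma omegaZ_succ (k l : ℕ) (i : Fin l) : omegaZ k l i.succ = (k:ℤ) := by
  simp [omegaZ, Fin.succ_ne_zero]

lemma omegaZ_val (k l : ℕ) (m : Fin (l+1)) :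
    omegaZ k l m = if (m : ℕ) = 0 then -((k:ℤ)+2) else (k:ℤ) := by
  simp [omegaZ, Fin.val_eq_zero_iff]

lemma sum_unitVec_apply (l : ℕ) (S : Finset ℕ) (m : Fin (l+1)) :
    (∑ n ∈ S, unitVec l n) m = if (m : ℕ) ∈ S then 1 else 0 := by
  rw [Finset.sum_apply]
  simp only [unitVec]
  exact Finset.sum_ite_eq S (m : ℕ) (fun _ => 1)
/-- For `k+2 ≤ l ≤ k+4`, the roots of `R^l_k` are exactly the differences
`eᵢ - eⱼ` of two distinct exceptional basis vectors together with the vectors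
`±(e₀ - e_{i₁} - ⋯ - e_{i_{k+2}})` for all choices of `k+2` distinct indices in
`{1, …, l}`. -/
theorem rootSet_eq_union (k l : ℕ) (hk : 1 ≤ k) (hlo : k + 2 ≤ l) (hhi : l ≤ k + 4) :
    rootSet k l =
      {v | ∃ i j : ℕ, 1 ≤ i ∧ i ≤ l ∧ 1 ≤ j ∧ j ≤ l ∧ i ≠ j ∧
        v = unitVec l i - unitVec l j} ∪
      {v | ∃ ε : ℤ, (ε = 1 ∨ ε = -1) ∧ ∃ S : Finset ℕ, S ⊆ Finset.Icc 1 l ∧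
        S.card = k + 2 ∧ v = ε • (unitVec l 0 - ∑ i ∈ S, unitVec l i)} := by
  ext v
  simp only [Set.mem_union, Set.mem_setOf_eq, rootSet]
  constructor
  · rintro ⟨hvv, hvo⟩
    simp only [bformZ] at hvv hvo
    rw [Fin.sum_univ_succ] at hvv hvo
    simp only [omegaZ_zero, omegaZ_succ] at hvo
    -- h1 : sum of squares of the tail
    have h1 : ∑ i : Fin l, v i.succ * v i.succ = k * (v 0 * v 0) + 2 := by
      linear_combination -hvv
    have h2 : ∑ i : Fin l, v i.succ = -((k : ℤ) + 2) * v 0 := by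
      rw [← Finset.sum_mul] at hvo
      have hk0 : (k : ℤ) ≠ 0 := by
        have : (1:ℤ) ≤ (k:ℤ) := by exact_mod_cast hk
        omega
      have hz : (k : ℤ) * ((∑ i : Fin l, v i.succ) + ((k:ℤ)+2) * v 0) = 0 := by
        linear_combination -hvo
      rcases mul_eq_zero.mp hz with h | h
      · exact absurd h hk0
      · linarith
    have hb := bound_a k l hk hhi (v 0) (fun i => v i.succ) h1 h2
    have htri : v 0 = 0 ∨ v 0 = 1 ∨ v 0 = -1 := by
      rcases le_or_gt (v 0) (-2) with h | h
      · nlinarith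
      · rcases le_or_gt 2 (v 0) with h' | h'
        · nlinarith
        · omega
    rcases htri with h0 | h0
    · -- v 0 = 0 : difference of basis vectors
      left
      rw [h0] at h1 h2
      norm_num at h1 h2
      obtain ⟨i, j, hij, hwi, hwj, hrest⟩ := case_zero l (fun i => v i.succ) h1 h2
      refine ⟨(i : ℕ) + 1, (j : ℕ) + 1, by omega, by have := i.isLt; omega,
        by omega, by have := j.isLt; omega, ?_, ?_⟩
      · intro h
        exact hij (Fin.ext (by omega))
      · funext m
        rcases Fin.eq_zero_or_eq_succ m with rfl | ⟨r, rfl⟩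
        · show v 0 = unitVec l ((i:ℕ)+1) 0 - unitVec l ((j:ℕ)+1) 0
          have hz0 : ((0 : Fin (l+1)) : ℕ) = 0 := rfl
          rw [h0]
          simp only [unitVec, hz0]
          rw [if_neg (by omega), if_neg (by omega)]
          ring
        · show v r.succ = unitVec l ((i:ℕ)+1) r.succ - unitVec l ((j:ℕ)+1) r.succ
          simp only [unitVec, Fin.val_succ]
          by_cases hri : r = i
          · subst hri
            rw [if_pos rfl, if_neg (by intro h; exact hij (Fin.ext (by omega))), hwi]
            ring
          · by_cases hrj : r = j
            · subst hrj
              rw [if_neg (by intro h; exact hri (Fin.ext (by omega))), if_pos rfl, hwj]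
              ring
            · rw [if_neg (by intro h; exact hri (Fin.ext (by omega))),
                if_neg (by intro h; exact hrj (Fin.ext (by omega))),
                hrest r hri hrj]
              ring
    · -- v 0 = ±1 : the exceptional roots
      right
      have ha : v 0 = 1 ∨ v 0 = -1 := h0
      obtain ⟨T, hTcard, hwT⟩ := case_one k l (v 0) ha (fun i => v i.succ) h1 h2
      have hinj : Function.Injective (fun i : Fin l => (i : ℕ) + 1) := by
        intro x y h
        simp only at h
        exact Fin.ext (by omega)
      refine ⟨v 0, ha, T.image (fun i : Fin l => (i : ℕ) + 1), ?_, ?_, ?_⟩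
      · intro n hn
        obtain ⟨i, _, rfl⟩ := Finset.mem_image.mp hn
        exact Finset.mem_Icc.mpr ⟨by omega, by have := i.isLt; omega⟩
      · rw [Finset.card_image_of_injective _ hinj]
        exact_mod_cast hTcard
      · funext m
        have hmem : ∀ r : Fin l, ((r : ℕ) + 1 ∈ T.image (fun i : Fin l => (i : ℕ) + 1)) ↔ r ∈ T := by
          intro r
          constructor
          · intro h
            obtain ⟨x, hx, hxe⟩ := Finset.mem_image.mp h
            have hxr : x = r := Fin.ext (by omega)
            exact hxr ▸ hx
          · intro h
            exact Finset.mem_image.mpr ⟨r, h, rfl⟩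
        rcases Fin.eq_zero_or_eq_succ m with rfl | ⟨r, rfl⟩
        · show v 0 = v 0 * (unitVec l 0 0 - (∑ n ∈ T.image (fun i : Fin l => (i:ℕ)+1), unitVec l n) 0)
          rw [sum_unitVec_apply]
          have hz0 : ((0 : Fin (l+1)) : ℕ) = 0 := rfl
          rw [hz0]
          have h0n : 0 ∉ T.image (fun i : Fin l => (i : ℕ) + 1) := by
            intro h
            obtain ⟨i, _, hi⟩ := Finset.mem_image.mp h
            omega
          rw [if_neg h0n]
          simp [unitVec]
        · show v r.succ = v 0 * (unitVec l 0 r.succ - (∑ n ∈ T.image (fun i : Fin l => (i:ℕ)+1), unitVec l n) r.succ)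
          rw [sum_unitVec_apply, hwT r]
          have hval : ((r.succ : Fin (l+1)) : ℕ) = (r : ℕ) + 1 := Fin.val_succ r
          rw [hval]
          have hu : unitVec l 0 r.succ = 0 := by
            simp [unitVec, Fin.val_succ]
          rw [hu]
          by_cases h : r ∈ T
          · rw [if_pos h, if_pos ((hmem r).mpr h)]
            ring
          · rw [if_neg h, if_neg (fun hc => h ((hmem r).mp hc))]
            ring
  · rintro (⟨i, j, hi1, hil, hj1, hjl, hij, rfl⟩ | ⟨ε, hε, S, hS, hcard, rfl⟩)
    · -- difference of basis vectors is a root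
      have hv : ∀ m : Fin (l+1), (unitVec l i - unitVec l j) m =
          (if (m : ℕ) = i then (1:ℤ) else 0) - (if (m : ℕ) = j then 1 else 0) := fun m => rfl
      have hz0 : ((0 : Fin (l+1)) : ℕ) = 0 := rfl
      have hv0 : (unitVec l i - unitVec l j) 0 = 0 := by
        rw [hv 0, hz0, if_neg (by omega), if_neg (by omega)]
        ring
      have hiR : i ∈ Finset.range (l+1) := Finset.mem_range.mpr (by omega)
      have hjR : j ∈ Finset.range (l+1) := Finset.mem_range.mpr (by omega)
      have hsq : ∑ m : Fin (l+1),
          (unitVec l i - unitVec l j) m * (unitVec l i - unitVec l j) m = 2 := by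
        have hconv : ∑ m : Fin (l+1),
            (unitVec l i - unitVec l j) m * (unitVec l i - unitVec l j) m =
            ∑ n ∈ Finset.range (l+1),
              ((if n = i then (1:ℤ) else 0) - (if n = j then 1 else 0)) *
              ((if n = i then (1:ℤ) else 0) - (if n = j then 1 else 0)) :=
          Fin.sum_univ_eq_sum_range
            (fun n => ((if n = i then (1:ℤ) else 0) - (if n = j then 1 else 0)) *
              ((if n = i then (1:ℤ) else 0) - (if n = j then 1 else 0))) (l+1)
        rw [hconv]
        have hpt : ∀ n ∈ Finset.range (l+1),
            ((if n = i then (1:ℤ) else 0) - (if n = j then 1 else 0)) *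
            ((if n = i then (1:ℤ) else 0) - (if n = j then 1 else 0)) =
            (if n = i then (1:ℤ) else 0) + (if n = j then 1 else 0) := by
          intro n _
          by_cases hni : n = i
          · subst hni
            rw [if_pos rfl, if_neg hij]
            ring
          · by_cases hnj : n = j
            · subst hnj
              rw [if_neg hni, if_pos rfl]
              ring
            · rw [if_neg hni, if_neg hnj]
              ring
        rw [Finset.sum_congr rfl hpt, Finset.sum_add_distrib,
          Finset.sum_ite_eq' (Finset.range (l+1)) i (fun _ => (1:ℤ)),
          Finset.sum_ite_eq' (Finset.range (l+1)) j (fun _ => (1:ℤ)),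
          if_pos hiR, if_pos hjR]
        norm_num
      have hso : ∑ m : Fin (l+1),
          (unitVec l i - unitVec l j) m * omegaZ k l m = 0 := by
        have hconv : ∑ m : Fin (l+1),
            (unitVec l i - unitVec l j) m * omegaZ k l m =
            ∑ n ∈ Finset.range (l+1),
              ((if n = i then (1:ℤ) else 0) - (if n = j then 1 else 0)) *
              (if n = 0 then -((k:ℤ)+2) else (k:ℤ)) := by
          rw [← Fin.sum_univ_eq_sum_range
            (fun n => ((if n = i then (1:ℤ) else 0) - (if n = j then 1 else 0)) *
              (if n = 0 then -((k:ℤ)+2) else (k:ℤ))) (l+1)]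
          exact Finset.sum_congr rfl (fun m _ => by rw [hv m, omegaZ_val])
        rw [hconv]
        have hpt : ∀ n ∈ Finset.range (l+1),
            ((if n = i then (1:ℤ) else 0) - (if n = j then 1 else 0)) *
            (if n = 0 then -((k:ℤ)+2) else (k:ℤ)) =
            (if n = i then (k:ℤ) else 0) - (if n = j then (k:ℤ) else 0) := by
          intro n _
          by_cases hni : n = i
          · have hnj' : ¬ n = j := by omega
            have hn0 : ¬ n = 0 := by omega
            simp only [if_pos hni, if_neg hnj', if_neg hn0]
            ring
          · by_cases hnj : n = j
            · have hn0 : ¬ n = 0 := by omega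
              simp only [if_neg hni, if_pos hnj, if_neg hn0]
              ring
            · simp only [if_neg hni, if_neg hnj]
              ring
        rw [Finset.sum_congr rfl hpt, Finset.sum_sub_distrib,
          Finset.sum_ite_eq' (Finset.range (l+1)) i (fun _ => (k:ℤ)),
          Finset.sum_ite_eq' (Finset.range (l+1)) j (fun _ => (k:ℤ)),
          if_pos hiR, if_pos hjR]
        ring
      constructor
      · simp only [bformZ]
        rw [hv0, hsq]
        ring
      · simp only [bformZ]
        rw [hv0, hso]
        ring
    · -- the exceptional vectors are roots
      have hε2 : ε * ε = 1 := by rcases hε with h | h <;> rw [h] <;> norm_num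
      have h0S : (0:ℕ) ∉ S := by
        intro h
        have := Finset.mem_Icc.mp (hS h)
        omega
      have hSr : S ⊆ Finset.range (l+1) := by
        intro n hn
        have := Finset.mem_Icc.mp (hS hn)
        exact Finset.mem_range.mpr (by omega)
      have hcardZ : (S.card : ℤ) = (k:ℤ) + 2 := by exact_mod_cast hcard
      have hz0 : ((0 : Fin (l+1)) : ℕ) = 0 := rfl
      set V := ε • (unitVec l 0 - ∑ n ∈ S, unitVec l n) with hV
      have hv : ∀ m : Fin (l+1), V m =
          ε * ((if (m : ℕ) = 0 then (1:ℤ) else 0) - (if (m : ℕ) ∈ S then 1 else 0)) := by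
        intro m
        rw [hV]
        simp only [Pi.smul_apply, Pi.sub_apply, smul_eq_mul, unitVec, sum_unitVec_apply]
      have hv0 : V 0 = ε := by
        rw [hv 0, hz0, if_pos rfl, if_neg h0S]
        ring
      have hSsum : ∀ c : ℤ, ∑ n ∈ Finset.range (l+1), (if n ∈ S then c else 0) =
          ((k:ℤ) + 2) * c := by
        intro c
        rw [Finset.sum_ite_mem, Finset.inter_eq_right.mpr hSr, Finset.sum_const,
          nsmul_eq_mul, hcardZ]
      have hsq : ∑ m : Fin (l+1), V m * V m = (k:ℤ) + 3 := by
        have hconv : ∑ m : Fin (l+1), V m * V m =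
            ∑ n ∈ Finset.range (l+1),
              (ε * ((if n = 0 then (1:ℤ) else 0) - (if n ∈ S then 1 else 0))) *
              (ε * ((if n = 0 then (1:ℤ) else 0) - (if n ∈ S then 1 else 0))) := by
          rw [← Fin.sum_univ_eq_sum_range
            (fun n => (ε * ((if n = 0 then (1:ℤ) else 0) - (if n ∈ S then 1 else 0))) *
              (ε * ((if n = 0 then (1:ℤ) else 0) - (if n ∈ S then 1 else 0)))) (l+1)]
          exact Finset.sum_congr rfl (fun m _ => by rw [hv m])
        rw [hconv]
        have hpt : ∀ n ∈ Finset.range (l+1),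
            (ε * ((if n = 0 then (1:ℤ) else 0) - (if n ∈ S then 1 else 0))) *
            (ε * ((if n = 0 then (1:ℤ) else 0) - (if n ∈ S then 1 else 0))) =
            (if n = 0 then (1:ℤ) else 0) + (if n ∈ S then 1 else 0) := by
          intro n _
          by_cases hn0 : n = 0
          · subst hn0
            rw [if_pos rfl, if_neg h0S]
            linear_combination hε2
          · by_cases hnS : n ∈ S
            · rw [if_neg hn0, if_pos hnS]
              linear_combination hε2
            · rw [if_neg hn0, if_neg hnS]
              ring
        rw [Finset.sum_congr rfl hpt, Finset.sum_add_distrib,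
          Finset.sum_ite_eq' (Finset.range (l+1)) 0 (fun _ => (1:ℤ)),
          if_pos (Finset.mem_range.mpr (by omega)), hSsum 1]
        ring
      have hso : ∑ m : Fin (l+1), V m * omegaZ k l m = ε * -((k:ℤ)+2) + ((k:ℤ)+2) * (-(ε * k)) := by
        have hconv : ∑ m : Fin (l+1), V m * omegaZ k l m =
            ∑ n ∈ Finset.range (l+1),
              (ε * ((if n = 0 then (1:ℤ) else 0) - (if n ∈ S then 1 else 0))) *
              (if n = 0 then -((k:ℤ)+2) else (k:ℤ)) := by
          rw [← Fin.sum_univ_eq_sum_range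
            (fun n => (ε * ((if n = 0 then (1:ℤ) else 0) - (if n ∈ S then 1 else 0))) *
              (if n = 0 then -((k:ℤ)+2) else (k:ℤ))) (l+1)]
          exact Finset.sum_congr rfl (fun m _ => by rw [hv m, omegaZ_val])
        rw [hconv]
        have hpt : ∀ n ∈ Finset.range (l+1),
            (ε * ((if n = 0 then (1:ℤ) else 0) - (if n ∈ S then 1 else 0))) *
            (if n = 0 then -((k:ℤ)+2) else (k:ℤ)) =
            (if n = 0 then ε * -((k:ℤ)+2) else 0) + (if n ∈ S then -(ε * (k:ℤ)) else 0) := by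
          intro n _
          by_cases hn0 : n = 0
          · subst hn0
            rw [if_pos rfl, if_neg h0S, if_pos rfl, if_pos rfl, if_neg h0S]
            ring
          · by_cases hnS : n ∈ S
            · rw [if_neg hn0, if_pos hnS, if_neg hn0, if_neg hn0, if_pos hnS]
              ring
            · rw [if_neg hn0, if_neg hnS, if_neg hn0, if_neg hn0, if_neg hnS]
              ring
        rw [Finset.sum_congr rfl hpt, Finset.sum_add_distrib,
          Finset.sum_ite_eq' (Finset.range (l+1)) 0 (fun _ => ε * -((k:ℤ)+2)),
          if_pos (Finset.mem_range.mpr (by omega)), hSsum (-(ε * (k:ℤ)))]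
      constructor
      · simp only [bformZ]
        rw [hv0, hsq]
        linear_combination ((k:ℤ)+1) * hε2
      · simp only [bformZ]
        rw [hv0, hso, omegaZ_zero]
        ring
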